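/- Let (G, 𝒫, 𝒯) be an instance of Partitioned Vertex Cover and let H be the Popular Matching instance constructed from it. If M is a popular matching in H, then U := {i ∈ V(G) : {a_i, b_i} ∈ M} is a solution of (G, 𝒫, 𝒯). -/

import Mathlib

open SimpleGraph

universe u

/-- A matching: a set of edges of `G` that are pairwise vertex-disjoint. -/
def IsMatching {W : Type u} (G : SimpleGraph W) (M : Set (Sym2 W)) : Prop :=
  M ⊆ G.edgeSet ∧ ∀ e ∈ M, ∀ e' ∈ M, e ≠ e' → ∀ v : W, v ∈ e → v ∉ e'

/-- `v` is matched by `M`. -/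
def Matched {W : Type u} (M : Set (Sym2 W)) (v : W) : Prop := ∃ w : W, s(v, w) ∈ M

open scoped Classical in
/-- `rank G pref M v = pref v (M(v))`, with the convention `|N(v)|+1` if `v` is unmatched. -/
noncomputable def rank {W : Type u} (G : SimpleGraph W) (pref : W → W → ℕ)
    (M : Set (Sym2 W)) (v : W) : ℕ :=
  if h : ∃ w : W, s(v, w) ∈ M then pref v h.choose else (G.neighborSet v).ncard + 1

/-- The number of vertices preferring `M` over `M'`. -/
noncomputable def vote {W : Type u} (G : SimpleGraph W) (pref : W → W → ℕ)
    (M M' : Set (Sym2 W)) : ℕ :=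
  {v : W | rank G pref M v < rank G pref M' v}.ncard

/-- A popular matching: no other matching is more popular. -/
def IsPopular {W : Type u} (G : SimpleGraph W) (pref : W → W → ℕ) (M : Set (Sym2 W)) : Prop :=
  IsMatching G M ∧
    ∀ M' : Set (Sym2 W), IsMatching G M' → vote G pref M' M ≤ vote G pref M M'

/-- Each vertex has a strict preference list: `pref v` is a bijection from the
neighborhood of `v` onto `{1, …, |N(v)|}`. -/
def HasPref {W : Type u} (G : SimpleGraph W) (pref : W → W → ℕ) : Prop :=
  ∀ v : W, Set.BijOn (pref v) (G.neighborSet v) (Set.Icc 1 (G.neighborSet v).ncard)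

/-- The edge `e ∉ M` is labeled `+2` by `label_M` (given rank function `rk`):
both endpoints prefer each other over their status in `M`. -/
def EdgePlus {W : Type u} (pref : W → W → ℕ) (rk : W → ℕ) (e : Sym2 W) : Prop :=
  ∃ x y : W, e = s(x, y) ∧ pref x y < rk x ∧ pref y x < rk y

/-- The edge `e ∉ M` is labeled `-2` by `label_M` (given rank function `rk`):
both endpoints prefer their status in `M` over each other. -/
def EdgeMinus {W : Type u} (pref : W → W → ℕ) (rk : W → ℕ) (e : Sym2 W) : Prop :=
  ∃ x y : W, e = s(x, y) ∧ rk x < pref x y ∧ rk y < pref y x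

/-- The graph `G_M`: the spanning subgraph of `G` consisting of the edges of `M`
together with the edges not labeled `-2`. -/
def GMgraph {W : Type u} (G : SimpleGraph W) (pref : W → W → ℕ) (M : Set (Sym2 W)) :
    SimpleGraph W where
  Adj x y := G.Adj x y ∧ (s(x, y) ∈ M ∨ ¬ EdgeMinus pref (rank G pref M) s(x, y))
  symm := by
    constructor
    intro x y h
    refine ⟨h.1.symm, ?_⟩
    rw [Sym2.eq_swap]
    exact h.2
  loopless := ⟨fun x h => G.ne_of_adj h.1 rfl⟩

/-- Consecutive edges alternate between `M` and non-`M`. -/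
def altRel {W : Type u} (M : Set (Sym2 W)) (e e' : Sym2 W) : Prop := e ∈ M ↔ e' ∉ M

/-- An alternating path (with respect to `M`) in a graph `G'`. -/
def IsAltPath {W : Type u} (M : Set (Sym2 W)) {G' : SimpleGraph W} {x y : W}
    (p : G'.Walk x y) : Prop :=
  p.IsPath ∧ List.Chain' (altRel M) p.edges ∧
    (∀ e, p.edges.head? = some e → e ∉ M → ¬ Matched M x) ∧
    (∀ e, p.edges.getLast? = some e → e ∉ M → ¬ Matched M y)

/-- An alternating cycle (with respect to `M`) in a graph `G'`:
the edges alternate cyclically between `M` and non-`M`. -/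
def IsAltCycle {W : Type u} (M : Set (Sym2 W)) {G' : SimpleGraph W} {x : W}
    (p : G'.Walk x x) : Prop :=
  p.IsCycle ∧ List.Chain' (altRel M) (p.edges ++ p.edges.take 1)

/-- `l` contains at least one edge labeled `+2`. -/
def OnePlusEdge {W : Type u} (pref : W → W → ℕ) (rk : W → ℕ) (l : List (Sym2 W)) : Prop :=
  ∃ e ∈ l, EdgePlus pref rk e

/-- `l` contains at least two edges labeled `+2`. -/
def TwoPlusEdges {W : Type u} (pref : W → W → ℕ) (rk : W → ℕ) (l : List (Sym2 W)) : Prop :=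
  ∃ e ∈ l, ∃ e' ∈ l, e ≠ e' ∧ EdgePlus pref rk e ∧ EdgePlus pref rk e'

/-- A vertex cover. -/
def IsVC {V : Type u} (G : SimpleGraph V) (U : Set V) : Prop :=
  ∀ ⦃x y : V⦄, G.Adj x y → x ∈ U ∨ y ∈ U
/-- An instance of Partitioned Vertex Cover: `G` is a finite simple graph, `P` is a
collection of pairwise disjoint edges of `G`, `T` is a collection of pairwise disjoint
3-element vertex sets each inducing a triangle in `G`, and every vertex of `G` lies in
exactly one member of `P ∪ T`. -/
def IsPVC {V : Type u} (G : SimpleGraph V) (P : Set (Sym2 V)) (T : Set (Finset V)) : Prop :=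
  Finite V ∧
  P ⊆ G.edgeSet ∧
  (∀ e ∈ P, ∀ e' ∈ P, e ≠ e' → ∀ v : V, v ∈ e → v ∉ e') ∧
  (∀ t ∈ T, t.card = 3) ∧
  (∀ t ∈ T, ∀ x ∈ t, ∀ y ∈ t, x ≠ y → G.Adj x y) ∧
  (∀ t ∈ T, ∀ t' ∈ T, t ≠ t' → ∀ v : V, v ∈ t → v ∉ t') ∧
  (∀ v : V, (∃ e ∈ P, v ∈ e) ∨ (∃ t ∈ T, v ∈ t)) ∧
  (∀ v : V, ¬ ((∃ e ∈ P, v ∈ e) ∧ (∃ t ∈ T, v ∈ t)))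

/-- A solution of a Partitioned Vertex Cover instance: a vertex cover `U` with
`|U ∩ P| = 1` for every pair `P` and `|U ∩ T| = 2` for every triple `T`. -/
def IsPVCSolution {V : Type u} (G : SimpleGraph V) (P : Set (Sym2 V)) (T : Set (Finset V))
    (U : Set V) : Prop :=
  IsVC G U ∧
  (∀ e ∈ P, {x : V | x ∈ e ∧ x ∈ U}.ncard = 1) ∧
  (∀ t ∈ T, {x : V | x ∈ t ∧ x ∈ U}.ncard = 2)

/-- The vertices of the graph `H` built from a Partitioned Vertex Cover instance:
`a i`, `b i`, `c i`, `d i` for a vertex `i` of `G`; `u i j` is the vertex `u^e_i` for the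
edge `e = {i,j}` of `G`; `f i j` is the vertex `f_{ij}` for the pair `{i,j} ∈ P`. -/
inductive Gad (V : Type u) : Type u where
  | a : V → Gad V
  | b : V → Gad V
  | c : V → Gad V
  | d : V → Gad V
  | u : V → V → Gad V
  | f : V → V → Gad V
deriving DecidableEq

/-- Which formal gadget vertices are really vertices of `H`. -/
def Gad.valid {V : Type u} (G : SimpleGraph V) (P : Set (Sym2 V)) : Gad V → Prop
  | .u i j => G.Adj i j
  | .f i j => s(i, j) ∈ P
  | _ => True

/-- The edges of `H`, up to symmetry. -/
inductive HBase {V : Type u} (G : SimpleGraph V) (P : Set (Sym2 V)) (T : Set (Finset V)) :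
    Gad V → Gad V → Prop where
  | da (i : V) : HBase G P T (.d i) (.a i)
  | ab (i : V) : HBase G P T (.a i) (.b i)
  | ac (i : V) : HBase G P T (.a i) (.c i)
  | bc (i : V) : HBase G P T (.b i) (.c i)
  | uu {i j : V} (h : G.Adj i j) : HBase G P T (.u i j) (.u j i)
  | bu {i j : V} (h : G.Adj i j) : HBase G P T (.b i) (.u i j)
  | df {i j : V} (h : s(i, j) ∈ P) : HBase G P T (.d i) (.f i j)
  | fc {i j : V} (h : s(i, j) ∈ P) : HBase G P T (.f i j) (.c j)
  | cd {i j : V} (h : s(i, j) ∈ P) : HBase G P T (.c i) (.d j)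
  | dd {i j : V} {t : Finset V} (ht : t ∈ T) (hi : i ∈ t) (hj : j ∈ t) (hne : i ≠ j) :
      HBase G P T (.d i) (.d j)
  | cc {i j : V} {t : Finset V} (ht : t ∈ T) (hi : i ∈ t) (hj : j ∈ t) (hne : i ≠ j) :
      HBase G P T (.c i) (.c j)

/-- The graph `H` of the Popular Matching instance built from `(G, P, T)`. -/
def Hgraph {V : Type u} (G : SimpleGraph V) (P : Set (Sym2 V)) (T : Set (Finset V)) :
    SimpleGraph {g : Gad V // Gad.valid G P g} where
  Adj x y := x ≠ y ∧ (HBase G P T x.1 y.1 ∨ HBase G P T y.1 x.1)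
  symm := ⟨fun _ _ h => ⟨h.1.symm, h.2.symm⟩⟩
  loopless := ⟨fun _ h => h.1 rfl⟩

/-- The Popular Matching instance (graph together with preference lists) constructed
from a Partitioned Vertex Cover instance `(G, P, T)`.  The field `pref` gives the
preference lists; all its values on the neighborhoods in `H` are pinned down, except
the ranks that `b i` assigns to the vertices `u^e_i`, which form an arbitrary fixed
bijection onto `{2, …, deg_G(i) + 1}`. -/
structure Reduction (V : Type u) [LinearOrder V] : Type u where
  G : SimpleGraph V
  P : Set (Sym2 V)
  T : Set (Finset V)
  ispvc : IsPVC G P T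
  pref : Gad V → Gad V → ℕ
  pref_ab : ∀ i : V, pref (.a i) (.b i) = 1
  pref_ac : ∀ i : V, pref (.a i) (.c i) = 2
  pref_ad : ∀ i : V, pref (.a i) (.d i) = 3
  pref_ba : ∀ i : V, pref (.b i) (.a i) = 1
  pref_bu : ∀ i : V, Set.BijOn (pref (.b i)) {g : Gad V | ∃ j : V, G.Adj i j ∧ g = .u i j}
      (Set.Icc 2 ((G.neighborSet i).ncard + 1))
  pref_bc : ∀ i : V, pref (.b i) (.c i) = (G.neighborSet i).ncard + 2
  pref_ca : ∀ i : V, pref (.c i) (.a i) = 1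
  pref_cb : ∀ i : V, pref (.c i) (.b i) = 2
  pref_da : ∀ i : V, pref (.d i) (.a i) = 1
  pref_uu : ∀ i j : V, G.Adj i j → pref (.u i j) (.u j i) = 1
  pref_ub : ∀ i j : V, G.Adj i j → pref (.u i j) (.b i) = 2
  pref_cf : ∀ i j : V, s(i, j) ∈ P → pref (.c i) (.f j i) = 3
  pref_cd : ∀ i j : V, s(i, j) ∈ P → pref (.c i) (.d j) = 4
  pref_dc : ∀ i j : V, s(i, j) ∈ P → pref (.d i) (.c j) = 2
  pref_df : ∀ i j : V, s(i, j) ∈ P → pref (.d i) (.f i j) = 3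
  pref_fd : ∀ i j : V, s(i, j) ∈ P → pref (.f i j) (.d i) = 1
  pref_fc : ∀ i j : V, s(i, j) ∈ P → pref (.f i j) (.c j) = 2
  pref_tri : ∀ t ∈ T, ∀ i j k : V, t = {i, j, k} → i < j → j < k →
    pref (.c i) (.c k) = 3 ∧ pref (.c i) (.c j) = 4 ∧
    pref (.c j) (.c i) = 3 ∧ pref (.c j) (.c k) = 4 ∧
    pref (.c k) (.c j) = 3 ∧ pref (.c k) (.c i) = 4 ∧
    pref (.d i) (.d j) = 2 ∧ pref (.d i) (.d k) = 3 ∧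
    pref (.d j) (.d k) = 2 ∧ pref (.d j) (.d i) = 3 ∧
    pref (.d k) (.d i) = 2 ∧ pref (.d k) (.d j) = 3

namespace Reduction

variable {V : Type u} [LinearOrder V] (R : Reduction V)

/-- The vertex set of `H`. -/
abbrev HV : Type u := {g : Gad V // Gad.valid R.G R.P g}

/-- The graph `H`. -/
def H : SimpleGraph R.HV := Hgraph R.G R.P R.T

/-- The preference lists of `H`, as a function on its vertices. -/
def prefH : R.HV → R.HV → ℕ := fun x y => R.pref x.1 y.1

/-- The vertex `a_i` of `H`. -/
def va (i : V) : R.HV := ⟨.a i, trivial⟩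
/-- The vertex `b_i` of `H`. -/
def vb (i : V) : R.HV := ⟨.b i, trivial⟩
/-- The vertex `c_i` of `H`. -/
def vc (i : V) : R.HV := ⟨.c i, trivial⟩
/-- The vertex `d_i` of `H`. -/
def vd (i : V) : R.HV := ⟨.d i, trivial⟩
/-- The vertex `u^e_i` of `H`, for an edge `e = {i,j}` of `G`. -/
def vu (i j : V) (h : R.G.Adj i j) : R.HV := ⟨.u i j, h⟩
/-- The vertex `f_{ij}` of `H`, for a pair `{i,j} ∈ P`. -/
def vf (i j : V) (h : s(i, j) ∈ R.P) : R.HV := ⟨.f i j, h⟩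

/-- The matching `M*` in `H` constructed from a solution `U`. -/
def Mstar (U : Set V) : Set (Sym2 R.HV) :=
  {e : Sym2 R.HV |
    (∃ (i j : V) (h : R.G.Adj i j), e = s(R.vu i j h, R.vu j i h.symm)) ∨
    (∃ (x y : V) (h : s(x, y) ∈ R.P) (h' : s(y, x) ∈ R.P), x ∉ U ∧ y ∈ U ∧
      (e = s(R.va x, R.vd x) ∨ e = s(R.vb x, R.vc x) ∨ e = s(R.va y, R.vb y) ∨
       e = s(R.vf x y h, R.vc y) ∨ e = s(R.vf y x h', R.vd y))) ∨
    (∃ t ∈ R.T, ∃ x y z : V, t = {x, y, z} ∧ x ∉ U ∧ y ∈ U ∧ z ∈ U ∧ y ≠ z ∧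
      R.pref (.d x) (.d y) < R.pref (.d x) (.d z) ∧
      (e = s(R.va x, R.vd x) ∨ e = s(R.vb x, R.vc x) ∨ e = s(R.va y, R.vb y) ∨
       e = s(R.va z, R.vb z) ∨ e = s(R.vc y, R.vc z) ∨ e = s(R.vd y, R.vd z)))}

end Reduction

/-- The vertex set of the Pair Selector gadget associated with a pair `{i,j}`. -/
def pairGadget {V : Type u} (i j : V) : Set (Gad V) :=
  {g : Gad V | ∃ x : V, (x = i ∨ x = j) ∧ (g = .a x ∨ g = .b x ∨ g = .c x ∨ g = .d x)} ∪
    {Gad.f i j, Gad.f j i}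

/-- The vertex set of the Triple Selector gadget associated with a triple `t`. -/
def tripleGadget {V : Type u} (t : Finset V) : Set (Gad V) :=
  {g : Gad V | ∃ x ∈ t, g = .a x ∨ g = .b x ∨ g = .c x ∨ g = .d x}

section Infra

variable {W : Type u} {G : SimpleGraph W} {pref : W → W → ℕ} {M : Set (Sym2 W)}

lemma rank_eq_of_mem (hM : IsMatching G M) {v w : W} (h : s(v, w) ∈ M) :
    rank G pref M v = pref v w := by
  have hex : ∃ u, s(v, u) ∈ M := ⟨w, h⟩
  rw [rank, dif_pos hex]
  have hc := hex.choose_spec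
  by_cases he : s(v, hex.choose) = s(v, w)
  · rw [Sym2.congr_right.mp he]
  · exact absurd (Sym2.mem_mk_left v w)
      (hM.2 _ hc _ h he v (Sym2.mem_mk_left v _))

lemma rank_eq_of_unmatched (h : ¬ Matched M v) :
    rank G pref M v = (G.neighborSet v).ncard + 1 := by
  rw [rank, dif_neg (show ¬∃ w, s(v, w) ∈ M from h)]

lemma matched_of_mem {e : Sym2 W} (he : e ∈ M) {v : W} (hv : v ∈ e) : Matched M v := by
  obtain ⟨w, hw⟩ := Sym2.mem_iff_exists.mp hv
  exact ⟨w, hw ▸ he⟩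

lemma eq_partner (hM : IsMatching G M) {v w : W} (h : s(v, w) ∈ M)
    {e' : Sym2 W} (h' : e' ∈ M) (hv : v ∈ e') : e' = s(v, w) := by
  by_contra hne
  exact hM.2 e' h' _ h hne v hv (Sym2.mem_mk_left v w)

lemma rank_congr {M' : Set (Sym2 W)} (hM : IsMatching G M) (hM' : IsMatching G M')
    {v : W} (h : ∀ w, s(v, w) ∈ M ↔ s(v, w) ∈ M') :
    rank G pref M v = rank G pref M' v := by
  by_cases hv : ∃ w, s(v, w) ∈ M
  · obtain ⟨w, hw⟩ := hv
    rw [rank_eq_of_mem hM hw, rank_eq_of_mem hM' ((h w).mp hw)]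
  · rw [rank, dif_neg hv, rank, dif_neg (fun ⟨w, hw⟩ => hv ⟨w, (h w).mpr hw⟩)]

lemma ncard_neighbors_ge (s : Finset W) [Finite W] (h : ∀ x ∈ s, x ∈ G.neighborSet v) :
    s.card ≤ (G.neighborSet v).ncard := by
  have := Set.ncard_le_ncard (show ↑s ⊆ G.neighborSet v from h) (Set.toFinite _)
  rwa [Set.ncard_coe_finset] at this

lemma popular_contra [Finite W] (hM : IsPopular G pref M) {M' : Set (Sym2 W)}
    (hM' : IsMatching G M') (A : List W) (Wn : Finset W)
    (hsub : ∀ v ∈ Wn, v ∈ A)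
    (hout : ∀ v, v ∉ A → rank G pref M v = rank G pref M' v)
    (hwin : ∀ v ∈ Wn, rank G pref M' v < rank G pref M v)
    (hcard : A.length < 2 * Wn.card) : False := by
  classical
  have hsub' : Wn ⊆ A.toFinset := fun v hv => List.mem_toFinset.mpr (hsub v hv)
  have g1 : Wn.card ≤ vote G pref M' M := by
    have h1 : (Wn : Set W) ⊆ {v | rank G pref M' v < rank G pref M v} :=
      fun v hv => hwin v hv
    have := Set.ncard_le_ncard h1 (Set.toFinite _)
    rwa [Set.ncard_coe_finset] at this
  have g2 : vote G pref M M' ≤ (A.toFinset \ Wn).card := by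
    have h2 : {v | rank G pref M v < rank G pref M' v} ⊆ ((A.toFinset \ Wn : Finset W) : Set W) := by
      intro v hv
      simp only [Finset.coe_sdiff, Set.mem_diff, Finset.mem_coe, List.mem_toFinset]
      refine ⟨?_, fun hW => absurd (hwin v hW) (not_lt.mpr (le_of_lt hv))⟩
      by_contra hA
      exact absurd (hout v hA) (ne_of_lt hv)
    have := Set.ncard_le_ncard h2 (Set.toFinite _)
    rwa [Set.ncard_coe_finset] at this
  have g3 := hM.2 M' hM'
  have g4 : (A.toFinset \ Wn).card = A.toFinset.card - Wn.card := Finset.card_sdiff_of_subset hsub'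
  have g5 : A.toFinset.card ≤ A.length := A.toFinset_card_le
  have g6 : Wn.card ≤ A.toFinset.card := Finset.card_le_card hsub'
  omega

lemma isMatching_swap (hM : IsMatching G M) (Rm Ad : Set (Sym2 W))
    (hAdE : Ad ⊆ G.edgeSet)
    (hAdD : ∀ e ∈ Ad, ∀ e' ∈ Ad, e ≠ e' → ∀ v : W, v ∈ e → v ∉ e')
    (hsep : ∀ e ∈ Ad, ∀ v : W, v ∈ e → ∀ e' ∈ M, v ∈ e' → e' ∈ Rm) :
    IsMatching G ((M \ Rm) ∪ Ad) := by
  constructor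
  · rintro e (⟨he, -⟩ | he)
    · exact hM.1 he
    · exact hAdE he
  · rintro e (⟨he, heR⟩ | he) e' (⟨he', heR'⟩ | he') hne v hv hv'
    · exact hM.2 e he e' he' hne v hv hv'
    · exact heR (hsep e' he' v hv' e he hv)
    · exact heR' (hsep e he v hv e' he' hv')
    · exact hAdD e he e' he' hne v hv hv'

lemma rank_swap_out {Rm Ad : Set (Sym2 W)} (hM : IsMatching G M)
    (hM' : IsMatching G ((M \ Rm) ∪ Ad)) (A : List W)
    (hRA : ∀ e ∈ Rm, e ∈ M → ∀ v : W, v ∈ e → v ∈ A)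
    (hAA : ∀ e ∈ Ad, ∀ v : W, v ∈ e → v ∈ A)
    {v : W} (hv : v ∉ A) : rank G pref M v = rank G pref ((M \ Rm) ∪ Ad) v := by
  refine rank_congr hM hM' fun w => ⟨fun h => ?_, ?_⟩
  · exact Or.inl ⟨h, fun hR => hv (hRA _ hR h v (Sym2.mem_mk_left v w))⟩
  · rintro (⟨h, -⟩ | h)
    · exact h
    · exact absurd (hAA _ h v (Sym2.mem_mk_left v w)) hv

lemma improve_edge [Finite W] (hM : IsPopular G pref M) {x y : W}
    (hadj : G.Adj x y) (hx : ¬ Matched M x)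
    (h1 : pref x y < rank G pref M x) (h2 : pref y x < rank G pref M y) : False := by
  classical
  have hxy : x ≠ y := hadj.ne
  set Rm : Set (Sym2 W) := {e | y ∈ e} with hRm
  set Ad : Set (Sym2 W) := {s(x, y)} with hAd
  have hsep : ∀ e ∈ Ad, ∀ v : W, v ∈ e → ∀ e' ∈ M, v ∈ e' → e' ∈ Rm := by
    rintro e he v hv e' he' hv'
    rw [hAd, Set.mem_singleton_iff] at he
    subst he
    rcases Sym2.mem_iff.mp hv with rfl | rfl
    · exact absurd (matched_of_mem he' hv') hx
    · exact hv'
  have hM' : IsMatching G ((M \ Rm) ∪ Ad) := by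
    refine isMatching_swap hM.1 Rm Ad ?_ ?_ hsep
    · rintro e he; rw [hAd, Set.mem_singleton_iff] at he; subst he
      exact hadj
    · rintro e he e' he' hne v hv hv'
      rw [hAd, Set.mem_singleton_iff] at he he'
      exact hne (he.trans he'.symm)
  have hmem : s(x, y) ∈ (M \ Rm) ∪ Ad := Or.inr rfl
  have hrx : rank G pref ((M \ Rm) ∪ Ad) x = pref x y := rank_eq_of_mem hM' hmem
  have hry : rank G pref ((M \ Rm) ∪ Ad) y = pref y x :=
    rank_eq_of_mem hM' (Sym2.eq_swap (a := y) (b := x) ▸ hmem)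
  by_cases hy : Matched M y
  · obtain ⟨w, hw⟩ := hy
    have hwx : w ≠ x := fun h => hx (matched_of_mem hw (h ▸ Sym2.mem_mk_right y w))
    have hwy : w ≠ y := fun h => (G.loopless.irrefl y (h ▸ hM.1.1 hw)).elim
    refine popular_contra hM hM' [x, y, w] {x, y} ?_ ?_ ?_ ?_
    · intro v hv; rcases Finset.mem_insert.mp hv with rfl | hv
      · exact List.mem_cons_self
      · rw [Finset.mem_singleton] at hv; subst hv; simp
    · intro v hv
      refine rank_swap_out hM.1 hM' [x, y, w] ?_ ?_ hv
      · rintro e heR heM u hu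
        have he' : e = s(y, w) := eq_partner hM.1 hw heM heR
        subst he'
        rcases Sym2.mem_iff.mp hu with rfl | rfl <;> simp
      · rintro e he u hu
        rw [hAd, Set.mem_singleton_iff] at he; subst he
        rcases Sym2.mem_iff.mp hu with rfl | rfl <;> simp
    · intro v hv; rcases Finset.mem_insert.mp hv with rfl | hv
      · rw [hrx]; exact h1
      · rw [Finset.mem_singleton] at hv; subst hv; rw [hry]; exact h2
    · rw [Finset.card_insert_of_notMem (by simpa using hxy), Finset.card_singleton]
      simp
  · refine popular_contra hM hM' [x, y] {x, y} ?_ ?_ ?_ ?_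
    · intro v hv; rcases Finset.mem_insert.mp hv with rfl | hv
      · exact List.mem_cons_self
      · rw [Finset.mem_singleton] at hv; subst hv; simp
    · intro v hv
      refine rank_swap_out hM.1 hM' [x, y] ?_ ?_ hv
      · rintro e heR heM u hu
        exact absurd (matched_of_mem heM heR) hy
      · rintro e he u hu
        rw [hAd, Set.mem_singleton_iff] at he; subst he
        rcases Sym2.mem_iff.mp hu with rfl | rfl <;> simp
    · intro v hv; rcases Finset.mem_insert.mp hv with rfl | hv
      · rw [hrx]; exact h1
      · rw [Finset.mem_singleton] at hv; subst hv; rw [hry]; exact h2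
    · rw [Finset.card_insert_of_notMem (by simpa using hxy), Finset.card_singleton]
      simp

end Infra
namespace Reduction

lemma valid_a_mk {V : Type u} (G : SimpleGraph V) (P : Set (Sym2 V)) (i : V) :
    Gad.valid G P (.a i) := trivial
lemma valid_b_mk {V : Type u} (G : SimpleGraph V) (P : Set (Sym2 V)) (i : V) :
    Gad.valid G P (.b i) := trivial
lemma valid_c_mk {V : Type u} (G : SimpleGraph V) (P : Set (Sym2 V)) (i : V) :
    Gad.valid G P (.c i) := trivial
lemma valid_d_mk {V : Type u} (G : SimpleGraph V) (P : Set (Sym2 V)) (i : V) :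
    Gad.valid G P (.d i) := trivial
lemma valid_u_mk {V : Type u} (G : SimpleGraph V) (P : Set (Sym2 V)) {i j : V}
    (h : G.Adj i j) : Gad.valid G P (.u i j) := h
lemma valid_f_mk {V : Type u} (G : SimpleGraph V) (P : Set (Sym2 V)) {i j : V}
    (h : s(i, j) ∈ P) : Gad.valid G P (.f i j) := h
lemma va_eq_mk {V : Type u} [LinearOrder V] (R : Reduction V) (i : V) :
    R.va i = ⟨.a i, valid_a_mk R.G R.P i⟩ := rfl
lemma vb_eq_mk {V : Type u} [LinearOrder V] (R : Reduction V) (i : V) :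
    R.vb i = ⟨.b i, valid_b_mk R.G R.P i⟩ := rfl
lemma vc_eq_mk {V : Type u} [LinearOrder V] (R : Reduction V) (i : V) :
    R.vc i = ⟨.c i, valid_c_mk R.G R.P i⟩ := rfl
lemma vd_eq_mk {V : Type u} [LinearOrder V] (R : Reduction V) (i : V) :
    R.vd i = ⟨.d i, valid_d_mk R.G R.P i⟩ := rfl
lemma vu_eq_mk {V : Type u} [LinearOrder V] (R : Reduction V) (i j : V) (h : R.G.Adj i j) :
    R.vu i j h = ⟨.u i j, valid_u_mk R.G R.P h⟩ := rfl
lemma vf_eq_mk {V : Type u} [LinearOrder V] (R : Reduction V) (i j : V) (h : s(i, j) ∈ R.P) :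
    R.vf i j h = ⟨.f i j, valid_f_mk R.G R.P h⟩ := rfl

attribute [local simp] Reduction.va_eq_mk Reduction.vb_eq_mk Reduction.vc_eq_mk
  Reduction.vd_eq_mk Reduction.vu_eq_mk Reduction.vf_eq_mk

variable {V : Type u} [LinearOrder V] (R : Reduction V)

lemma finite_HV : Finite R.HV := by
  have : Finite V := R.ispvc.1
  have : Finite (Gad V) := by
    refine Finite.of_surjective
      (fun p : V × V × Fin 6 =>
        (![Gad.a p.1, Gad.b p.1, Gad.c p.1, Gad.d p.1,
           Gad.u p.1 p.2.1, Gad.f p.1 p.2.1] : Fin 6 → Gad V) p.2.2) ?_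
    intro g
    cases g with
    | a i => exact ⟨(i, i, 0), rfl⟩
    | b i => exact ⟨(i, i, 1), rfl⟩
    | c i => exact ⟨(i, i, 2), rfl⟩
    | d i => exact ⟨(i, i, 3), rfl⟩
    | u i j => exact ⟨(i, j, 4), rfl⟩
    | f i j => exact ⟨(i, j, 5), rfl⟩
  exact Subtype.finite

lemma H_adj {x y : R.HV} :
    R.H.Adj x y ↔ x ≠ y ∧ (HBase R.G R.P R.T x.1 y.1 ∨ HBase R.G R.P R.T y.1 x.1) :=
  Iff.rfl

variable {i j k : V}

lemma adj_ab : R.H.Adj (R.va i) (R.vb i) :=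
  ⟨by simp, Or.inl (.ab i)⟩
lemma adj_ac : R.H.Adj (R.va i) (R.vc i) :=
  ⟨by simp, Or.inl (.ac i)⟩
lemma adj_ad : R.H.Adj (R.va i) (R.vd i) :=
  ⟨by simp, Or.inr (.da i)⟩
lemma adj_bc : R.H.Adj (R.vb i) (R.vc i) :=
  ⟨by simp, Or.inl (.bc i)⟩
lemma adj_bu (h : R.G.Adj i j) : R.H.Adj (R.vb i) (R.vu i j h) :=
  ⟨by simp, Or.inl (.bu h)⟩
lemma adj_uu (h : R.G.Adj i j) : R.H.Adj (R.vu i j h) (R.vu j i h.symm) :=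
  ⟨by simp [h.ne], Or.inl (.uu h)⟩
lemma adj_cd' (h : s(i, j) ∈ R.P) : R.H.Adj (R.vc i) (R.vd j) :=
  ⟨by simp, Or.inl (.cd h)⟩
lemma adj_df (h : s(i, j) ∈ R.P) : R.H.Adj (R.vd i) (R.vf i j h) :=
  ⟨by simp, Or.inl (.df h)⟩
lemma adj_fc (h : s(i, j) ∈ R.P) : R.H.Adj (R.vf i j h) (R.vc j) :=
  ⟨by simp, Or.inl (.fc h)⟩
lemma adj_cc {t : Finset V} (ht : t ∈ R.T) (hi : i ∈ t) (hj : j ∈ t) (hne : i ≠ j) :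
    R.H.Adj (R.vc i) (R.vc j) :=
  ⟨by simp [hne], Or.inl (.cc ht hi hj hne)⟩

lemma inv_a {g : Gad V}
    (h : HBase R.G R.P R.T (.a i) g ∨ HBase R.G R.P R.T g (.a i)) :
    g = .b i ∨ g = .c i ∨ g = .d i := by
  rcases h with h | h
  · cases h <;> simp
  · cases h <;> simp

lemma inv_b {g : Gad V}
    (h : HBase R.G R.P R.T (.b i) g ∨ HBase R.G R.P R.T g (.b i)) :
    g = .a i ∨ g = .c i ∨ ∃ j, R.G.Adj i j ∧ g = .u i j := by
  rcases h with h | h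
  · cases h with
    | bc => simp
    | bu hadj => exact Or.inr (Or.inr ⟨_, hadj, rfl⟩)
  · cases h with
    | ab => simp

lemma inv_c {g : Gad V}
    (h : HBase R.G R.P R.T (.c i) g ∨ HBase R.G R.P R.T g (.c i)) :
    g = .a i ∨ g = .b i ∨ (∃ j, s(j, i) ∈ R.P ∧ g = .f j i) ∨
      (∃ j, s(i, j) ∈ R.P ∧ g = .d j) ∨
      (∃ j t, t ∈ R.T ∧ i ∈ t ∧ j ∈ t ∧ i ≠ j ∧ g = .c j) := by
  rcases h with h | h
  · cases h with
    | cd hp => exact Or.inr (Or.inr (Or.inr (Or.inl ⟨_, hp, rfl⟩)))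
    | cc ht hi hj hne => exact Or.inr (Or.inr (Or.inr (Or.inr ⟨_, _, ht, hi, hj, hne, rfl⟩)))
  · cases h with
    | ac => simp
    | bc => simp
    | fc hp => exact Or.inr (Or.inr (Or.inl ⟨_, hp, rfl⟩))
    | cc ht hi hj hne => exact Or.inr (Or.inr (Or.inr (Or.inr ⟨_, _, ht, hj, hi, hne.symm, rfl⟩)))

lemma inv_d {g : Gad V}
    (h : HBase R.G R.P R.T (.d i) g ∨ HBase R.G R.P R.T g (.d i)) :
    g = .a i ∨ (∃ j, s(i, j) ∈ R.P ∧ g = .f i j) ∨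
      (∃ j, s(j, i) ∈ R.P ∧ g = .c j) ∨
      (∃ j t, t ∈ R.T ∧ i ∈ t ∧ j ∈ t ∧ i ≠ j ∧ g = .d j) := by
  rcases h with h | h
  · cases h with
    | da => simp
    | df hp => exact Or.inr (Or.inl ⟨_, hp, rfl⟩)
    | dd ht hi hj hne => exact Or.inr (Or.inr (Or.inr ⟨_, _, ht, hi, hj, hne, rfl⟩))
  · cases h with
    | cd hp => exact Or.inr (Or.inr (Or.inl ⟨_, hp, rfl⟩))
    | dd ht hi hj hne => exact Or.inr (Or.inr (Or.inr ⟨_, _, ht, hj, hi, hne.symm, rfl⟩))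

lemma inv_u {g : Gad V}
    (h : HBase R.G R.P R.T (.u i j) g ∨ HBase R.G R.P R.T g (.u i j)) :
    g = .u j i ∨ g = .b i := by
  rcases h with h | h
  · cases h with
    | uu => simp
  · cases h with
    | uu => simp
    | bu => simp

lemma inv_f {g : Gad V}
    (h : HBase R.G R.P R.T (.f i j) g ∨ HBase R.G R.P R.T g (.f i j)) :
    g = .d i ∨ g = .c j := by
  rcases h with h | h
  · cases h with
    | fc => simp
  · cases h with
    | df => simp

end Reduction
namespace Reduction

variable {V : Type u} [LinearOrder V] (R : Reduction V) {M : Set (Sym2 R.HV)}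
variable {i j k : V}

lemma mem_swap {W : Type u} {M : Set (Sym2 W)} {x y : W} (h : s(x, y) ∈ M) :
    s(y, x) ∈ M := Sym2.eq_swap (a := x) (b := y) ▸ h

lemma partner_unique {W : Type u} {G : SimpleGraph W} {M : Set (Sym2 W)}
    (hM : IsMatching G M) {u v w : W} (h1 : s(u, v) ∈ M) (h2 : s(u, w) ∈ M) : w = v :=
  Sym2.congr_right.mp (eq_partner hM h1 h2 (Sym2.mem_mk_left u w))

lemma adj_of_mem (hM : IsMatching R.H M) {x y : R.HV} (h : s(x, y) ∈ M) :
    R.H.Adj x y := (SimpleGraph.mem_edgeSet _).mp (hM.1 h)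

lemma partner_a (hM : IsMatching R.H M) {x : R.HV} (h : s(R.va i, x) ∈ M) :
    x = R.vb i ∨ x = R.vc i ∨ x = R.vd i := by
  rcases R.inv_a (R.adj_of_mem hM h).2 with h1 | h1 | h1
  · exact Or.inl (Subtype.ext h1)
  · exact Or.inr (Or.inl (Subtype.ext h1))
  · exact Or.inr (Or.inr (Subtype.ext h1))

lemma partner_b (hM : IsMatching R.H M) {x : R.HV} (h : s(R.vb i, x) ∈ M) :
    x = R.va i ∨ x = R.vc i ∨ ∃ j, ∃ hj : R.G.Adj i j, x = R.vu i j hj := by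
  rcases R.inv_b (R.adj_of_mem hM h).2 with h1 | h1 | ⟨j, hj, h1⟩
  · exact Or.inl (Subtype.ext h1)
  · exact Or.inr (Or.inl (Subtype.ext h1))
  · exact Or.inr (Or.inr ⟨j, hj, Subtype.ext h1⟩)

lemma partner_u (hM : IsMatching R.H M) {hadj : R.G.Adj i j} {x : R.HV}
    (h : s(R.vu i j hadj, x) ∈ M) :
    x = R.vu j i hadj.symm ∨ x = R.vb i := by
  rcases R.inv_u (R.adj_of_mem hM h).2 with h1 | h1
  · exact Or.inl (Subtype.ext h1)
  · exact Or.inr (Subtype.ext h1)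

lemma partner_c (hM : IsMatching R.H M) {x : R.HV} (h : s(R.vc i, x) ∈ M) :
    x = R.va i ∨ x = R.vb i ∨ (∃ j, ∃ hp : s(j, i) ∈ R.P, x = R.vf j i hp) ∨
      (∃ j, s(i, j) ∈ R.P ∧ x = R.vd j) ∨
      (∃ j t, t ∈ R.T ∧ i ∈ t ∧ j ∈ t ∧ i ≠ j ∧ x = R.vc j) := by
  rcases R.inv_c (R.adj_of_mem hM h).2 with h1 | h1 | ⟨j, hp, h1⟩ | ⟨j, hp, h1⟩ |
    ⟨j, t, ht, hi, hj, hne, h1⟩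
  · exact Or.inl (Subtype.ext h1)
  · exact Or.inr (Or.inl (Subtype.ext h1))
  · exact Or.inr (Or.inr (Or.inl ⟨j, hp, Subtype.ext h1⟩))
  · exact Or.inr (Or.inr (Or.inr (Or.inl ⟨j, hp, Subtype.ext h1⟩)))
  · exact Or.inr (Or.inr (Or.inr (Or.inr ⟨j, t, ht, hi, hj, hne, Subtype.ext h1⟩)))

lemma partner_d (hM : IsMatching R.H M) {x : R.HV} (h : s(R.vd i, x) ∈ M) :
    x = R.va i ∨ (∃ j, ∃ hp : s(i, j) ∈ R.P, x = R.vf i j hp) ∨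
      (∃ j, s(j, i) ∈ R.P ∧ x = R.vc j) ∨
      (∃ j t, t ∈ R.T ∧ i ∈ t ∧ j ∈ t ∧ i ≠ j ∧ x = R.vd j) := by
  rcases R.inv_d (R.adj_of_mem hM h).2 with h1 | ⟨j, hp, h1⟩ | ⟨j, hp, h1⟩ |
    ⟨j, t, ht, hi, hj, hne, h1⟩
  · exact Or.inl (Subtype.ext h1)
  · exact Or.inr (Or.inl ⟨j, hp, Subtype.ext h1⟩)
  · exact Or.inr (Or.inr (Or.inl ⟨j, hp, Subtype.ext h1⟩))
  · exact Or.inr (Or.inr (Or.inr ⟨j, t, ht, hi, hj, hne, Subtype.ext h1⟩))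

lemma partner_f (hM : IsMatching R.H M) {hp : s(i, j) ∈ R.P} {x : R.HV}
    (h : s(R.vf i j hp, x) ∈ M) : x = R.vd i ∨ x = R.vc j := by
  rcases R.inv_f (R.adj_of_mem hM h).2 with h1 | h1
  · exact Or.inl (Subtype.ext h1)
  · exact Or.inr (Subtype.ext h1)

/-! ### P/T disjointness helpers -/

lemma P_ne_of_mem (hp : s(i, j) ∈ R.P) : i ≠ j :=
  ((SimpleGraph.mem_edgeSet _).mp (R.ispvc.2.1 hp)).ne

lemma P_unique {e e' : Sym2 V} (h1 : e ∈ R.P) (h2 : e' ∈ R.P) {v : V}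
    (hv : v ∈ e) (hv' : v ∈ e') : e = e' := by
  by_contra hne
  exact R.ispvc.2.2.1 e h1 e' h2 hne v hv hv'

lemma P_right_unique (h1 : s(i, j) ∈ R.P) (h2 : s(i, k) ∈ R.P) : k = j :=
  Sym2.congr_right.mp (R.P_unique h2 h1 (Sym2.mem_mk_left i k) (Sym2.mem_mk_left i j))

lemma P_left_unique (h1 : s(i, j) ∈ R.P) (h2 : s(k, j) ∈ R.P) : k = i := by
  have := R.P_unique h2 h1 (Sym2.mem_mk_right k j) (Sym2.mem_mk_right i j)
  rcases Sym2.eq_iff.mp this with ⟨h, h'⟩ | ⟨h, h'⟩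
  · exact h
  · exact absurd h'.symm (R.P_ne_of_mem h1)

lemma not_in_T_of_P (hp : s(i, j) ∈ R.P) {t : Finset V} (ht : t ∈ R.T) : i ∉ t :=
  fun hit => R.ispvc.2.2.2.2.2.2.2 i ⟨⟨_, hp, Sym2.mem_mk_left i j⟩, ⟨t, ht, hit⟩⟩

lemma not_in_P_of_T {t : Finset V} (ht : t ∈ R.T) (hit : i ∈ t) {e : Sym2 V}
    (he : e ∈ R.P) : i ∉ e :=
  fun hie => R.ispvc.2.2.2.2.2.2.2 i ⟨⟨e, he, hie⟩, ⟨t, ht, hit⟩⟩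

lemma T_unique {t t' : Finset V} (h1 : t ∈ R.T) (h2 : t' ∈ R.T) (hv : i ∈ t)
    (hv' : i ∈ t') : t = t' := by
  by_contra hne
  exact R.ispvc.2.2.2.2.2.1 t h1 t' h2 hne i hv hv'

/-! ### pref bounds -/

lemma pref_bu_ge (hj : R.G.Adj i j) : 2 ≤ R.pref (.b i) (.u i j) :=
  ((R.pref_bu i).mapsTo ⟨j, hj, rfl⟩).1

lemma pref_bu_le (hj : R.G.Adj i j) :
    R.pref (.b i) (.u i j) ≤ (R.G.neighborSet i).ncard + 1 :=
  ((R.pref_bu i).mapsTo ⟨j, hj, rfl⟩).2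

end Reduction
namespace Reduction

variable {V : Type u} [LinearOrder V] (R : Reduction V) {M : Set (Sym2 R.HV)}
variable {i j k : V}

lemma ncard_nbhd_pos {x y : R.HV} (h : R.H.Adj x y) :
    1 ≤ (R.H.neighborSet x).ncard := by
  haveI := R.finite_HV
  have h2 := ncard_neighbors_ge (G := R.H) (v := x) {y}
    (by intro z hz; rw [Finset.mem_singleton] at hz; subst hz; exact h)
  rwa [Finset.card_singleton] at h2

lemma a_matched (hM : IsPopular R.H R.prefH M) (i : V) : Matched M (R.va i) := by
  haveI := R.finite_HV
  by_contra hx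
  refine improve_edge hM R.adj_ab hx ?_ ?_
  · have hb1 : R.prefH (R.va i) (R.vb i) = 1 := R.pref_ab i
    rw [hb1, rank_eq_of_unmatched hx]
    have h2 := R.ncard_nbhd_pos (R.adj_ab (i := i))
    omega
  · have hab1 : R.prefH (R.vb i) (R.va i) = 1 := R.pref_ba i
    rw [hab1]
    by_cases hb : Matched M (R.vb i)
    · obtain ⟨w, hw⟩ := hb
      rw [rank_eq_of_mem hM.1 hw]
      rcases R.partner_b hM.1 hw with rfl | rfl | ⟨j, hj, rfl⟩
      · exact absurd ⟨_, mem_swap hw⟩ hx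
      · have h3 : R.prefH (R.vb i) (R.vc i) = (R.G.neighborSet i).ncard + 2 :=
          R.pref_bc i
        omega
      · have h3 : R.prefH (R.vb i) (R.vu i j hj) = R.pref (.b i) (.u i j) := rfl
        have h4 := R.pref_bu_ge hj
        omega
    · rw [rank_eq_of_unmatched hb]
      have h2 := R.ncard_nbhd_pos (R.adj_ab (i := i)).symm
      omega

lemma b_matched (hM : IsPopular R.H R.prefH M) (i : V)
    (hnU : s(R.va i, R.vb i) ∉ M) : Matched M (R.vb i) := by
  haveI := R.finite_HV
  by_contra hb
  obtain ⟨w, hw⟩ := R.a_matched hM i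
  have hr : rank R.H R.prefH M (R.va i) = R.prefH (R.va i) w := rank_eq_of_mem hM.1 hw
  have hne1 : 1 < rank R.H R.prefH M (R.va i) := by
    rcases R.partner_a hM.1 hw with rfl | rfl | rfl
    · exact absurd hw hnU
    · have h3 : R.prefH (R.va i) (R.vc i) = 2 := R.pref_ac i
      omega
    · have h3 : R.prefH (R.va i) (R.vd i) = 3 := R.pref_ad i
      omega
  refine improve_edge hM R.adj_ab.symm hb ?_ ?_
  · have h1 : R.prefH (R.vb i) (R.va i) = 1 := R.pref_ba i
    rw [h1, rank_eq_of_unmatched hb]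
    have h2 := R.ncard_nbhd_pos (R.adj_ab (i := i)).symm
    omega
  · have h1 : R.prefH (R.va i) (R.vb i) = 1 := R.pref_ab i
    rw [h1]
    exact hne1

lemma u_to_b (hM : IsPopular R.H R.prefH M) (hadj : R.G.Adj i j)
    (huu : s(R.vu i j hadj, R.vu j i hadj.symm) ∉ M) :
    s(R.vb i, R.vu i j hadj) ∈ M := by
  haveI := R.finite_HV
  by_cases hx : Matched M (R.vu i j hadj)
  · obtain ⟨w, hw⟩ := hx
    rcases R.partner_u hM.1 hw with rfl | rfl
    · exact absurd hw huu
    · exact mem_swap hw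
  · exfalso
    refine improve_edge hM (R.adj_uu hadj) hx ?_ ?_
    · have h1 : R.prefH (R.vu i j hadj) (R.vu j i hadj.symm) = 1 := R.pref_uu i j hadj
      rw [h1, rank_eq_of_unmatched hx]
      have h2 := R.ncard_nbhd_pos (R.adj_uu hadj)
      omega
    · have h1 : R.prefH (R.vu j i hadj.symm) (R.vu i j hadj) = 1 := R.pref_uu j i hadj.symm
      rw [h1]
      by_cases hy : Matched M (R.vu j i hadj.symm)
      · obtain ⟨w, hw⟩ := hy
        rw [rank_eq_of_mem hM.1 hw]
        rcases R.partner_u hM.1 hw with rfl | rfl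
        · exact absurd ⟨_, mem_swap hw⟩ hx
        · have h3 : R.prefH (R.vu j i hadj.symm) (R.vb j) = 2 := R.pref_ub j i hadj.symm
          omega
      · rw [rank_eq_of_unmatched hy]
        have h2 := R.ncard_nbhd_pos (R.adj_uu hadj).symm
        omega

lemma uu_dichotomy (hM : IsPopular R.H R.prefH M) (hadj : R.G.Adj i j) :
    s(R.vu i j hadj, R.vu j i hadj.symm) ∈ M ∨
      (s(R.vb i, R.vu i j hadj) ∈ M ∧ s(R.vb j, R.vu j i hadj.symm) ∈ M) := by
  by_cases huu : s(R.vu i j hadj, R.vu j i hadj.symm) ∈ M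
  · exact Or.inl huu
  · refine Or.inr ⟨R.u_to_b hM hadj huu, R.u_to_b hM hadj.symm ?_⟩
    intro h
    exact huu (mem_swap h)
end Reduction
lemma swap_beats {W : Type u} [Finite W] {G : SimpleGraph W} {pref : W → W → ℕ}
    {M : Set (Sym2 W)} (hM : IsPopular G pref M)
    (Rm Ad : Set (Sym2 W)) (A : List W) (Wn : Finset W)
    (hAdE : Ad ⊆ G.edgeSet)
    (hAdD : ∀ e ∈ Ad, ∀ e' ∈ Ad, e ≠ e' → ∀ v, v ∈ e → v ∉ e')
    (hsep : ∀ e ∈ Ad, ∀ v, v ∈ e → ∀ e' ∈ M, v ∈ e' → e' ∈ Rm)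
    (hRA : ∀ e ∈ Rm, e ∈ M → ∀ v, v ∈ e → v ∈ A)
    (hAA : ∀ e ∈ Ad, ∀ v, v ∈ e → v ∈ A)
    (hsub : ∀ v ∈ Wn, v ∈ A)
    (hwin : IsMatching G ((M \ Rm) ∪ Ad) →
      ∀ v ∈ Wn, rank G pref ((M \ Rm) ∪ Ad) v < rank G pref M v)
    (hcard : A.length < 2 * Wn.card) : False := by
  have hM' := isMatching_swap hM.1 Rm Ad hAdE hAdD hsep
  exact popular_contra hM hM' A Wn hsub
    (fun v hv => rank_swap_out hM.1 hM' A hRA hAA hv) (hwin hM') hcard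

namespace Reduction

attribute [local simp] Reduction.va_eq_mk Reduction.vb_eq_mk Reduction.vc_eq_mk
  Reduction.vd_eq_mk Reduction.vu_eq_mk Reduction.vf_eq_mk

variable {V : Type u} [LinearOrder V] (R : Reduction V) {M : Set (Sym2 R.HV)}
variable {i j k : V}

lemma caseA (hM : IsPopular R.H R.prefH M) (hadj : R.G.Adj i j)
    (hbi : s(R.vb i, R.vu i j hadj) ∈ M)
    (hbj : s(R.vb j, R.vu j i hadj.symm) ∈ M) : False := by
  haveI := R.finite_HV
  have hij : i ≠ j := hadj.ne
  obtain ⟨x, hx⟩ := R.a_matched hM i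
  have hxval : x = R.vc i ∨ x = R.vd i := by
    rcases R.partner_a hM.1 hx with rfl | h | h
    · have := partner_unique hM.1 (mem_swap hx) hbi
      simp at this
    · exact Or.inl h
    · exact Or.inr h
  have hpx : 2 ≤ R.prefH (R.va i) x := by
    rcases hxval with rfl | rfl
    · have h1 : R.prefH (R.va i) (R.vc i) = 2 := R.pref_ac i
      omega
    · have h1 : R.prefH (R.va i) (R.vd i) = 3 := R.pref_ad i
      omega
  refine swap_beats hM
    {s(R.vb i, R.vu i j hadj), s(R.vb j, R.vu j i hadj.symm), s(R.va i, x)}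
    {s(R.vu i j hadj, R.vu j i hadj.symm), s(R.va i, R.vb i)}
    [R.vu i j hadj, R.vu j i hadj.symm, R.vb i, R.vb j, R.va i, x]
    {R.vu i j hadj, R.vu j i hadj.symm, R.vb i, R.va i}
    ?_ ?_ ?_ ?_ ?_ ?_ ?_ ?_
  · rintro e (rfl | rfl)
    · exact (SimpleGraph.mem_edgeSet _).mpr (R.adj_uu hadj)
    · exact (SimpleGraph.mem_edgeSet _).mpr R.adj_ab
  · rintro e (rfl | rfl) e' (rfl | rfl) hne v hv hv' <;>
      rcases Sym2.mem_iff.mp hv with rfl | rfl <;>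
      simp_all [Sym2.mem_iff]
  · rintro e (rfl | rfl) v hv e' he' hv'
    · rcases Sym2.mem_iff.mp hv with rfl | rfl
      · rw [eq_partner hM.1 (mem_swap hbi) he' hv']
        exact Set.mem_insert_iff.mpr (Or.inl Sym2.eq_swap)
      · rw [eq_partner hM.1 (mem_swap hbj) he' hv']
        exact Set.mem_insert_iff.mpr (Or.inr (Set.mem_insert_iff.mpr (Or.inl Sym2.eq_swap)))
    · rcases Sym2.mem_iff.mp hv with rfl | rfl
      · rw [eq_partner hM.1 hx he' hv']
        exact Set.mem_insert_iff.mpr (Or.inr (Set.mem_insert_iff.mpr (Or.inr rfl)))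
      · rw [eq_partner hM.1 hbi he' hv']
        exact Set.mem_insert_iff.mpr (Or.inl rfl)
  · rintro e (rfl | rfl | rfl) - v hv <;> rcases Sym2.mem_iff.mp hv with rfl | rfl <;> simp
  · rintro e (rfl | rfl) v hv <;> rcases Sym2.mem_iff.mp hv with rfl | rfl <;> simp
  · intro v hv
    simp only [Finset.mem_insert, Finset.mem_singleton] at hv
    rcases hv with rfl | rfl | rfl | rfl <;> simp
  · intro hM' v hv
    simp only [Finset.mem_insert, Finset.mem_singleton] at hv
    rcases hv with rfl | rfl | rfl | rfl
    · rw [rank_eq_of_mem hM.1 (mem_swap hbi),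
        rank_eq_of_mem hM' (Or.inr (Set.mem_insert _ _))]
      have e1 : R.prefH (R.vu i j hadj) (R.vu j i hadj.symm) = 1 := R.pref_uu i j hadj
      have e2 : R.prefH (R.vu i j hadj) (R.vb i) = 2 := R.pref_ub i j hadj
      omega
    · rw [rank_eq_of_mem hM.1 (mem_swap hbj),
        rank_eq_of_mem hM' (mem_swap (Or.inr (Set.mem_insert _ _)))]
      have e1 : R.prefH (R.vu j i hadj.symm) (R.vu i j hadj) = 1 := R.pref_uu j i hadj.symm
      have e2 : R.prefH (R.vu j i hadj.symm) (R.vb j) = 2 := R.pref_ub j i hadj.symm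
      omega
    · rw [rank_eq_of_mem hM.1 hbi,
        rank_eq_of_mem hM' (mem_swap (Or.inr (Set.mem_insert_of_mem _ rfl)))]
      have e1 : R.prefH (R.vb i) (R.va i) = 1 := R.pref_ba i
      have e2 := R.pref_bu_ge hadj
      have e3 : R.prefH (R.vb i) (R.vu i j hadj) = R.pref (.b i) (.u i j) := rfl
      omega
    · rw [rank_eq_of_mem hM.1 hx,
        rank_eq_of_mem hM' (Or.inr (Set.mem_insert_of_mem _ rfl))]
      have e1 : R.prefH (R.va i) (R.vb i) = 1 := R.pref_ab i
      omega
  · have h4 : ({R.vu i j hadj, R.vu j i hadj.symm, R.vb i, R.va i} : Finset R.HV).card = 4 := by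
      rw [Finset.card_insert_of_notMem (by simp [hij]),
        Finset.card_insert_of_notMem (by simp),
        Finset.card_insert_of_notMem (by simp), Finset.card_singleton]
    rw [h4]
    simp

end Reduction
namespace Reduction

attribute [local simp] Reduction.va_eq_mk Reduction.vb_eq_mk Reduction.vc_eq_mk
  Reduction.vd_eq_mk Reduction.vu_eq_mk Reduction.vf_eq_mk

variable {V : Type u} [LinearOrder V] (R : Reduction V) {M : Set (Sym2 R.HV)}
variable {i j k : V}

lemma a_partner_out (hM : IsPopular R.H R.prefH M)
    (hnU : s(R.va i, R.vb i) ∉ M) :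
    ∃ x, s(R.va i, x) ∈ M ∧ 2 ≤ R.prefH (R.va i) x ∧ (x = R.vc i ∨ x = R.vd i) := by
  obtain ⟨x, hx⟩ := R.a_matched hM i
  refine ⟨x, hx, ?_, ?_⟩
  · rcases R.partner_a hM.1 hx with rfl | rfl | rfl
    · exact absurd hx hnU
    · have h1 : R.prefH (R.va i) (R.vc i) = 2 := R.pref_ac i
      omega
    · have h1 : R.prefH (R.va i) (R.vd i) = 3 := R.pref_ad i
      omega
  · rcases R.partner_a hM.1 hx with rfl | rfl | rfl
    · exact absurd hx hnU
    · exact Or.inl rfl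
    · exact Or.inr rfl

lemma caseB1 (hM : IsPopular R.H R.prefH M) (hadj : R.G.Adj i j) (hik : R.G.Adj i k)
    (huu : s(R.vu i j hadj, R.vu j i hadj.symm) ∈ M)
    (hbik : s(R.vb i, R.vu i k hik) ∈ M) : False := by
  haveI := R.finite_HV
  have hij : i ≠ j := hadj.ne
  have hik2 : i ≠ k := hik.ne
  have hkj : k ≠ j := by
    rintro rfl
    have := partner_unique hM.1 (mem_swap hbik) huu
    simp at this
  have hnUi : s(R.va i, R.vb i) ∉ M := by
    intro h
    have := partner_unique hM.1 (mem_swap h) hbik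
    simp at this
  obtain ⟨x, hx, hpx, -⟩ := R.a_partner_out hM hnUi
  have hbk : s(R.vb k, R.vu k i hik.symm) ∈ M := by
    rcases R.uu_dichotomy hM hik with huu' | ⟨-, h2⟩
    · have := partner_unique hM.1 (mem_swap hbik) huu'
      simp at this
    · exact h2
  have hnUk : s(R.va k, R.vb k) ∉ M := by
    intro h
    have := partner_unique hM.1 (mem_swap h) hbk
    simp at this
  obtain ⟨y, hy, hpy, -⟩ := R.a_partner_out hM hnUk
  refine swap_beats hM
    {s(R.vu i j hadj, R.vu j i hadj.symm), s(R.vb i, R.vu i k hik),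
      s(R.vb k, R.vu k i hik.symm), s(R.va i, x), s(R.va k, y)}
    {s(R.vu i k hik, R.vu k i hik.symm), s(R.va i, R.vb i), s(R.va k, R.vb k)}
    [R.vu i j hadj, R.vu j i hadj.symm, R.vb i, R.vu i k hik, R.vu k i hik.symm,
      R.vb k, R.va i, x, R.va k, y]
    {R.vb i, R.vu i k hik, R.vu k i hik.symm, R.vb k, R.va i, R.va k}
    ?_ ?_ ?_ ?_ ?_ ?_ ?_ ?_
  · rintro e (rfl | rfl | rfl)
    · exact (SimpleGraph.mem_edgeSet _).mpr (R.adj_uu hik)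
    · exact (SimpleGraph.mem_edgeSet _).mpr R.adj_ab
    · exact (SimpleGraph.mem_edgeSet _).mpr R.adj_ab
  · rintro e (rfl | rfl | rfl) e' (rfl | rfl | rfl) hne v hv hv' <;>
      rcases Sym2.mem_iff.mp hv with rfl | rfl <;>
      simp_all [Sym2.mem_iff]
  · rintro e (rfl | rfl | rfl) v hv e' he' hv'
    · rcases Sym2.mem_iff.mp hv with rfl | rfl
      · rw [eq_partner hM.1 (mem_swap hbik) he' hv']
        exact Set.mem_insert_iff.mpr (Or.inr (Set.mem_insert_iff.mpr (Or.inl Sym2.eq_swap)))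
      · rw [eq_partner hM.1 (mem_swap hbk) he' hv']
        exact Set.mem_insert_iff.mpr (Or.inr (Set.mem_insert_iff.mpr (Or.inr
          (Set.mem_insert_iff.mpr (Or.inl Sym2.eq_swap)))))
    · rcases Sym2.mem_iff.mp hv with rfl | rfl
      · rw [eq_partner hM.1 hx he' hv']
        exact Set.mem_insert_iff.mpr (Or.inr (Set.mem_insert_iff.mpr (Or.inr
          (Set.mem_insert_iff.mpr (Or.inr (Set.mem_insert_iff.mpr (Or.inl rfl)))))))
      · rw [eq_partner hM.1 hbik he' hv']
        exact Set.mem_insert_iff.mpr (Or.inr (Set.mem_insert_iff.mpr (Or.inl rfl)))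
    · rcases Sym2.mem_iff.mp hv with rfl | rfl
      · rw [eq_partner hM.1 hy he' hv']
        exact Set.mem_insert_iff.mpr (Or.inr (Set.mem_insert_iff.mpr (Or.inr
          (Set.mem_insert_iff.mpr (Or.inr (Set.mem_insert_iff.mpr (Or.inr rfl)))))))
      · rw [eq_partner hM.1 hbk he' hv']
        exact Set.mem_insert_iff.mpr (Or.inr (Set.mem_insert_iff.mpr (Or.inr
          (Set.mem_insert_iff.mpr (Or.inl rfl)))))
  · rintro e (rfl | rfl | rfl | rfl | rfl) - v hv <;>
      rcases Sym2.mem_iff.mp hv with rfl | rfl <;> simp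
  · rintro e (rfl | rfl | rfl) v hv <;>
      rcases Sym2.mem_iff.mp hv with rfl | rfl <;> simp
  · intro v hv
    simp only [Finset.mem_insert, Finset.mem_singleton] at hv
    rcases hv with rfl | rfl | rfl | rfl | rfl | rfl <;> simp
  · intro hM' v hv
    simp only [Finset.mem_insert, Finset.mem_singleton] at hv
    rcases hv with rfl | rfl | rfl | rfl | rfl | rfl
    · rw [rank_eq_of_mem hM.1 hbik,
        rank_eq_of_mem hM' (mem_swap (Or.inr (Set.mem_insert_of_mem _ (Set.mem_insert _ _))))]
      have e1 : R.prefH (R.vb i) (R.va i) = 1 := R.pref_ba i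
      have e2 := R.pref_bu_ge hik
      have e3 : R.prefH (R.vb i) (R.vu i k hik) = R.pref (.b i) (.u i k) := rfl
      omega
    · rw [rank_eq_of_mem hM.1 (mem_swap hbik),
        rank_eq_of_mem hM' (Or.inr (Set.mem_insert _ _))]
      have e1 : R.prefH (R.vu i k hik) (R.vu k i hik.symm) = 1 := R.pref_uu i k hik
      have e2 : R.prefH (R.vu i k hik) (R.vb i) = 2 := R.pref_ub i k hik
      omega
    · rw [rank_eq_of_mem hM.1 (mem_swap hbk),
        rank_eq_of_mem hM' (mem_swap (Or.inr (Set.mem_insert _ _)))]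
      have e1 : R.prefH (R.vu k i hik.symm) (R.vu i k hik) = 1 := R.pref_uu k i hik.symm
      have e2 : R.prefH (R.vu k i hik.symm) (R.vb k) = 2 := R.pref_ub k i hik.symm
      omega
    · rw [rank_eq_of_mem hM.1 hbk,
        rank_eq_of_mem hM' (mem_swap (Or.inr (Set.mem_insert_of_mem _
          (Set.mem_insert_of_mem _ rfl))))]
      have e1 : R.prefH (R.vb k) (R.va k) = 1 := R.pref_ba k
      have e2 := R.pref_bu_ge hik.symm
      have e3 : R.prefH (R.vb k) (R.vu k i hik.symm) = R.pref (.b k) (.u k i) := rfl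
      omega
    · rw [rank_eq_of_mem hM.1 hx,
        rank_eq_of_mem hM' (Or.inr (Set.mem_insert_of_mem _ (Set.mem_insert _ _)))]
      have e1 : R.prefH (R.va i) (R.vb i) = 1 := R.pref_ab i
      omega
    · rw [rank_eq_of_mem hM.1 hy,
        rank_eq_of_mem hM' (Or.inr (Set.mem_insert_of_mem _ (Set.mem_insert_of_mem _ rfl)))]
      have e1 : R.prefH (R.va k) (R.vb k) = 1 := R.pref_ab k
      omega
  · have h4 : ({R.vb i, R.vu i k hik, R.vu k i hik.symm, R.vb k, R.va i, R.va k} :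
        Finset R.HV).card = 6 := by
      rw [Finset.card_insert_of_notMem (by simp [hik2, hik2.symm]),
        Finset.card_insert_of_notMem (by simp [hik2, hik2.symm]),
        Finset.card_insert_of_notMem (by simp [hik2, hik2.symm]),
        Finset.card_insert_of_notMem (by simp [hik2, hik2.symm]),
        Finset.card_insert_of_notMem (by simp [hik2, hik2.symm]), Finset.card_singleton]
    rw [h4]
    simp

end Reduction
namespace Reduction

attribute [local simp] Reduction.va_eq_mk Reduction.vb_eq_mk Reduction.vc_eq_mk
  Reduction.vd_eq_mk Reduction.vu_eq_mk Reduction.vf_eq_mk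

variable {V : Type u} [LinearOrder V] (R : Reduction V) {M : Set (Sym2 R.HV)}
variable {i j k : V}

lemma caseB2 (hM : IsPopular R.H R.prefH M) (hadj : R.G.Adj i j)
    (huu : s(R.vu i j hadj, R.vu j i hadj.symm) ∈ M)
    (hbci : s(R.vb i, R.vc i) ∈ M) (hadi : s(R.va i, R.vd i) ∈ M)
    (hbcj : s(R.vb j, R.vc j) ∈ M) (hadj2 : s(R.va j, R.vd j) ∈ M) : False := by
  haveI := R.finite_HV
  have hij : i ≠ j := hadj.ne
  refine swap_beats hM
    {s(R.vu i j hadj, R.vu j i hadj.symm), s(R.vb i, R.vc i), s(R.va i, R.vd i),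
      s(R.vb j, R.vc j), s(R.va j, R.vd j)}
    {s(R.vb i, R.vu i j hadj), s(R.va i, R.vc i), s(R.vb j, R.vu j i hadj.symm),
      s(R.va j, R.vc j)}
    [R.vu i j hadj, R.vu j i hadj.symm, R.va i, R.vb i, R.vc i, R.vd i,
      R.va j, R.vb j, R.vc j, R.vd j]
    {R.vb i, R.va i, R.vc i, R.vb j, R.va j, R.vc j}
    ?_ ?_ ?_ ?_ ?_ ?_ ?_ ?_
  · rintro e (rfl | rfl | rfl | rfl)
    · exact (SimpleGraph.mem_edgeSet _).mpr (R.adj_bu hadj)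
    · exact (SimpleGraph.mem_edgeSet _).mpr R.adj_ac
    · exact (SimpleGraph.mem_edgeSet _).mpr (R.adj_bu hadj.symm)
    · exact (SimpleGraph.mem_edgeSet _).mpr R.adj_ac
  · rintro e (rfl | rfl | rfl | rfl) e' (rfl | rfl | rfl | rfl) hne v hv hv' <;>
      rcases Sym2.mem_iff.mp hv with rfl | rfl <;>
      simp_all [Sym2.mem_iff]
  · rintro e (rfl | rfl | rfl | rfl) v hv e' he' hv'
    · rcases Sym2.mem_iff.mp hv with rfl | rfl
      · rw [eq_partner hM.1 hbci he' hv']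
        exact Set.mem_insert_iff.mpr (Or.inr (Set.mem_insert_iff.mpr (Or.inl rfl)))
      · rw [eq_partner hM.1 huu he' hv']
        exact Set.mem_insert_iff.mpr (Or.inl rfl)
    · rcases Sym2.mem_iff.mp hv with rfl | rfl
      · rw [eq_partner hM.1 hadi he' hv']
        exact Set.mem_insert_iff.mpr (Or.inr (Set.mem_insert_iff.mpr (Or.inr
          (Set.mem_insert_iff.mpr (Or.inl rfl)))))
      · rw [eq_partner hM.1 (mem_swap hbci) he' hv']
        exact Set.mem_insert_iff.mpr (Or.inr (Set.mem_insert_iff.mpr (Or.inl Sym2.eq_swap)))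
    · rcases Sym2.mem_iff.mp hv with rfl | rfl
      · rw [eq_partner hM.1 hbcj he' hv']
        exact Set.mem_insert_iff.mpr (Or.inr (Set.mem_insert_iff.mpr (Or.inr
          (Set.mem_insert_iff.mpr (Or.inr (Set.mem_insert_iff.mpr (Or.inl rfl)))))))
      · rw [eq_partner hM.1 (mem_swap huu) he' hv']
        exact Set.mem_insert_iff.mpr (Or.inl Sym2.eq_swap)
    · rcases Sym2.mem_iff.mp hv with rfl | rfl
      · rw [eq_partner hM.1 hadj2 he' hv']
        exact Set.mem_insert_iff.mpr (Or.inr (Set.mem_insert_iff.mpr (Or.inr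
          (Set.mem_insert_iff.mpr (Or.inr (Set.mem_insert_iff.mpr (Or.inr rfl)))))))
      · rw [eq_partner hM.1 (mem_swap hbcj) he' hv']
        exact Set.mem_insert_iff.mpr (Or.inr (Set.mem_insert_iff.mpr (Or.inr
          (Set.mem_insert_iff.mpr (Or.inr (Set.mem_insert_iff.mpr (Or.inl Sym2.eq_swap)))))))
  · rintro e (rfl | rfl | rfl | rfl | rfl) - v hv <;>
      rcases Sym2.mem_iff.mp hv with rfl | rfl <;> simp
  · rintro e (rfl | rfl | rfl | rfl) v hv <;>
      rcases Sym2.mem_iff.mp hv with rfl | rfl <;> simp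
  · intro v hv
    simp only [Finset.mem_insert, Finset.mem_singleton] at hv
    rcases hv with rfl | rfl | rfl | rfl | rfl | rfl <;> simp
  · intro hM' v hv
    simp only [Finset.mem_insert, Finset.mem_singleton] at hv
    rcases hv with rfl | rfl | rfl | rfl | rfl | rfl
    · rw [rank_eq_of_mem hM.1 hbci,
        rank_eq_of_mem hM' (Or.inr (Set.mem_insert _ _))]
      have e1 : R.prefH (R.vb i) (R.vc i) = (R.G.neighborSet i).ncard + 2 := R.pref_bc i
      have e2 := R.pref_bu_le hadj
      have e3 : R.prefH (R.vb i) (R.vu i j hadj) = R.pref (.b i) (.u i j) := rfl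
      omega
    · rw [rank_eq_of_mem hM.1 hadi,
        rank_eq_of_mem hM' (Or.inr (Set.mem_insert_of_mem _ (Set.mem_insert _ _)))]
      have e1 : R.prefH (R.va i) (R.vd i) = 3 := R.pref_ad i
      have e2 : R.prefH (R.va i) (R.vc i) = 2 := R.pref_ac i
      omega
    · rw [rank_eq_of_mem hM.1 (mem_swap hbci),
        rank_eq_of_mem hM' (mem_swap (Or.inr (Set.mem_insert_of_mem _ (Set.mem_insert _ _))))]
      have e1 : R.prefH (R.vc i) (R.vb i) = 2 := R.pref_cb i
      have e2 : R.prefH (R.vc i) (R.va i) = 1 := R.pref_ca i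
      omega
    · rw [rank_eq_of_mem hM.1 hbcj,
        rank_eq_of_mem hM' (Or.inr (Set.mem_insert_of_mem _ (Set.mem_insert_of_mem _
          (Set.mem_insert _ _))))]
      have e1 : R.prefH (R.vb j) (R.vc j) = (R.G.neighborSet j).ncard + 2 := R.pref_bc j
      have e2 := R.pref_bu_le hadj.symm
      have e3 : R.prefH (R.vb j) (R.vu j i hadj.symm) = R.pref (.b j) (.u j i) := rfl
      omega
    · rw [rank_eq_of_mem hM.1 hadj2,
        rank_eq_of_mem hM' (Or.inr (Set.mem_insert_of_mem _ (Set.mem_insert_of_mem _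
          (Set.mem_insert_of_mem _ rfl))))]
      have e1 : R.prefH (R.va j) (R.vd j) = 3 := R.pref_ad j
      have e2 : R.prefH (R.va j) (R.vc j) = 2 := R.pref_ac j
      omega
    · rw [rank_eq_of_mem hM.1 (mem_swap hbcj),
        rank_eq_of_mem hM' (mem_swap (Or.inr (Set.mem_insert_of_mem _ (Set.mem_insert_of_mem _
          (Set.mem_insert_of_mem _ rfl)))))]
      have e1 : R.prefH (R.vc j) (R.vb j) = 2 := R.pref_cb j
      have e2 : R.prefH (R.vc j) (R.va j) = 1 := R.pref_ca j
      omega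
  · have h4 : ({R.vb i, R.va i, R.vc i, R.vb j, R.va j, R.vc j} :
        Finset R.HV).card = 6 := by
      rw [Finset.card_insert_of_notMem (by simp [hij, hij.symm]),
        Finset.card_insert_of_notMem (by simp [hij, hij.symm]),
        Finset.card_insert_of_notMem (by simp [hij, hij.symm]),
        Finset.card_insert_of_notMem (by simp [hij, hij.symm]),
        Finset.card_insert_of_notMem (by simp [hij, hij.symm]), Finset.card_singleton]
    rw [h4]
    simp

lemma cover (hM : IsPopular R.H R.prefH M) (hadj : R.G.Adj i j)
    (hnUi : s(R.va i, R.vb i) ∉ M) (hnUj : s(R.va j, R.vb j) ∉ M) : False := by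
  rcases R.uu_dichotomy hM hadj with huu | ⟨h1, h2⟩
  · obtain ⟨y, hy⟩ := R.b_matched hM i hnUi
    rcases R.partner_b hM.1 hy with rfl | rfl | ⟨k, hk, rfl⟩
    · exact hnUi (mem_swap hy)
    · obtain ⟨z, hz⟩ := R.b_matched hM j hnUj
      rcases R.partner_b hM.1 hz with rfl | rfl | ⟨k, hk, rfl⟩
      · exact hnUj (mem_swap hz)
      · obtain ⟨x, hx, -, hxcd⟩ := R.a_partner_out hM hnUi
        have hxd : x = R.vd i := by
          rcases hxcd with rfl | rfl
          · have := partner_unique hM.1 (mem_swap hy) (mem_swap hx)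
            simp at this
          · rfl
        subst hxd
        obtain ⟨x', hx', -, hxcd'⟩ := R.a_partner_out hM hnUj
        have hxd' : x' = R.vd j := by
          rcases hxcd' with rfl | rfl
          · have := partner_unique hM.1 (mem_swap hz) (mem_swap hx')
            simp at this
          · rfl
        subst hxd'
        exact R.caseB2 hM hadj huu hy hx hz hx'
      · exact R.caseB1 hM hadj.symm hk (mem_swap huu) hz
    · exact R.caseB1 hM hadj hk huu hy
  · exact R.caseA hM hadj h1 h2

lemma isvc (hM : IsPopular R.H R.prefH M) :
    IsVC R.G {i : V | s(R.va i, R.vb i) ∈ M} := by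
  intro x y hadj
  by_contra h
  push_neg at h
  exact R.cover hM hadj h.1 h.2

end Reduction
namespace Reduction

attribute [local simp] Reduction.va_eq_mk Reduction.vb_eq_mk Reduction.vc_eq_mk
  Reduction.vd_eq_mk Reduction.vu_eq_mk Reduction.vf_eq_mk

variable {V : Type u} [LinearOrder V] (R : Reduction V) {M : Set (Sym2 R.HV)}
variable {i j k m : V}

lemma ncard_ge2 {x y z : R.HV} (hy : R.H.Adj x y) (hz : R.H.Adj x z) (hyz : y ≠ z) :
    2 ≤ (R.H.neighborSet x).ncard := by
  haveI := R.finite_HV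
  have h2 := ncard_neighbors_ge (G := R.H) (v := x) {y, z} ?_
  · rwa [Finset.card_insert_of_notMem (by simpa using hyz), Finset.card_singleton] at h2
  · intro w hw
    rcases Finset.mem_insert.mp hw with rfl | hw
    · exact hy
    · rw [Finset.mem_singleton] at hw; subst hw; exact hz

lemma ncard_ge3 {x y z w : R.HV} (hy : R.H.Adj x y) (hz : R.H.Adj x z)
    (hw : R.H.Adj x w) (h1 : y ≠ z) (h2 : y ≠ w) (h3 : z ≠ w) :
    3 ≤ (R.H.neighborSet x).ncard := by
  haveI := R.finite_HV
  have h4 := ncard_neighbors_ge (G := R.H) (v := x) {y, z, w} ?_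
  · rwa [Finset.card_insert_of_notMem (by simp [h1, h2]),
      Finset.card_insert_of_notMem (by simpa using h3), Finset.card_singleton] at h4
  · intro a ha
    rcases Finset.mem_insert.mp ha with rfl | ha
    · exact hy
    rcases Finset.mem_insert.mp ha with rfl | ha
    · exact hz
    · rw [Finset.mem_singleton] at ha; subst ha; exact hw

lemma ncard_ge4 {x y z w v : R.HV} (hy : R.H.Adj x y) (hz : R.H.Adj x z)
    (hw : R.H.Adj x w) (hv : R.H.Adj x v) (h1 : y ≠ z) (h2 : y ≠ w) (h3 : y ≠ v)
    (h4 : z ≠ w) (h5 : z ≠ v) (h6 : w ≠ v) :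
    4 ≤ (R.H.neighborSet x).ncard := by
  haveI := R.finite_HV
  have h7 := ncard_neighbors_ge (G := R.H) (v := x) {y, z, w, v} ?_
  · rwa [Finset.card_insert_of_notMem (by simp [h1, h2, h3]),
      Finset.card_insert_of_notMem (by simp [h4, h5]),
      Finset.card_insert_of_notMem (by simpa using h6), Finset.card_singleton] at h7
  · intro a ha
    rcases Finset.mem_insert.mp ha with rfl | ha
    · exact hy
    rcases Finset.mem_insert.mp ha with rfl | ha
    · exact hz
    rcases Finset.mem_insert.mp ha with rfl | ha
    · exact hw
    · rw [Finset.mem_singleton] at ha; subst ha; exact hv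

lemma pair_not_both (hM : IsPopular R.H R.prefH M) (hp : s(i, j) ∈ R.P)
    (hUi : s(R.va i, R.vb i) ∈ M) (hUj : s(R.va j, R.vb j) ∈ M) : False := by
  haveI := R.finite_HV
  have hij : i ≠ j := R.P_ne_of_mem hp
  have hp' : s(j, i) ∈ R.P := mem_swap hp
  -- partner restrictions
  have pd : ∀ x, s(R.vd i, x) ∈ M → x = R.vf i j hp ∨ x = R.vc j := by
    intro x hx
    rcases R.partner_d hM.1 hx with rfl | ⟨j', hp2, rfl⟩ | ⟨j', hp2, rfl⟩ |
      ⟨j', t, ht, hit, -, -, rfl⟩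
    · have := partner_unique hM.1 hUi (mem_swap hx)
      simp at this
    · have hj' : j' = j := R.P_right_unique hp hp2
      subst hj'
      exact Or.inl rfl
    · have hj' : j' = j := R.P_left_unique hp' hp2
      subst hj'
      exact Or.inr rfl
    · exact absurd hit (R.not_in_T_of_P hp ht)
  have pc : ∀ x, s(R.vc j, x) ∈ M → x = R.vf i j hp ∨ x = R.vd i := by
    intro x hx
    rcases R.partner_c hM.1 hx with rfl | rfl | ⟨j', hp2, rfl⟩ | ⟨j', hp2, rfl⟩ |
      ⟨j', t, ht, hjt, -, -, rfl⟩
    · have := partner_unique hM.1 hUj (mem_swap hx)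
      simp at this
    · have := partner_unique hM.1 (mem_swap hUj) (mem_swap hx)
      simp at this
    · have hj' : j' = i := R.P_left_unique hp hp2
      subst hj'
      exact Or.inl rfl
    · have hj' : j' = i := R.P_right_unique hp' hp2
      subst hj'
      exact Or.inr rfl
    · exact absurd hjt (R.not_in_T_of_P hp' ht)
  -- ncard bounds
  have nf : 2 ≤ (R.H.neighborSet (R.vf i j hp)).ncard :=
    R.ncard_ge2 (R.adj_df hp).symm (R.adj_fc hp) (by simp)
  have nd : 3 ≤ (R.H.neighborSet (R.vd i)).ncard :=
    R.ncard_ge3 R.adj_ad.symm (R.adj_df hp) (R.adj_cd' hp').symm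
      (by simp) (by simp) (by simp)
  have nc : 4 ≤ (R.H.neighborSet (R.vc j)).ncard :=
    R.ncard_ge4 (R.adj_ac (i := j)).symm (R.adj_bc (i := j)).symm (R.adj_fc hp).symm
      (R.adj_cd' hp') (by simp) (by simp) (by simp) (by simp) (by simp) (by simp)
  by_cases hf : Matched M (R.vf i j hp)
  · obtain ⟨y, hy⟩ := hf
    rcases R.partner_f hM.1 hy with rfl | rfl
    · -- f matched to d i; c j unmatched
      have hcu : ¬ Matched M (R.vc j) := by
        rintro ⟨z, hz⟩
        rcases pc z hz with rfl | rfl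
        · have := partner_unique hM.1 hy (mem_swap hz)
          simp at this
        · have := partner_unique hM.1 (mem_swap hy) (mem_swap hz)
          simp at this
      refine improve_edge hM (R.adj_cd' hp') hcu ?_ ?_
      · have e1 : R.prefH (R.vc j) (R.vd i) = 4 := R.pref_cd j i hp'
        rw [e1, rank_eq_of_unmatched hcu]
        omega
      · rw [rank_eq_of_mem hM.1 (mem_swap hy)]
        have e1 : R.prefH (R.vd i) (R.vc j) = 2 := R.pref_dc i j hp
        have e2 : R.prefH (R.vd i) (R.vf i j hp) = 3 := R.pref_df i j hp
        omega
    · -- f matched to c j; d i unmatched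
      have hdu : ¬ Matched M (R.vd i) := by
        rintro ⟨z, hz⟩
        rcases pd z hz with rfl | rfl
        · have := partner_unique hM.1 hy (mem_swap hz)
          simp at this
        · have := partner_unique hM.1 (mem_swap hy) (mem_swap hz)
          simp at this
      refine improve_edge hM (R.adj_df hp) hdu ?_ ?_
      · have e1 : R.prefH (R.vd i) (R.vf i j hp) = 3 := R.pref_df i j hp
        rw [e1, rank_eq_of_unmatched hdu]
        omega
      · rw [rank_eq_of_mem hM.1 hy]
        have e1 : R.prefH (R.vf i j hp) (R.vd i) = 1 := R.pref_fd i j hp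
        have e2 : R.prefH (R.vf i j hp) (R.vc j) = 2 := R.pref_fc i j hp
        omega
  · by_cases hd : Matched M (R.vd i)
    · obtain ⟨z, hz⟩ := hd
      rcases pd z hz with rfl | rfl
      · exact hf ⟨R.vd i, mem_swap hz⟩
      · -- d i matched to c j; f unmatched
        refine improve_edge hM (R.adj_fc hp) hf ?_ ?_
        · have e1 : R.prefH (R.vf i j hp) (R.vc j) = 2 := R.pref_fc i j hp
          rw [e1, rank_eq_of_unmatched hf]
          omega
        · rw [rank_eq_of_mem hM.1 (mem_swap hz)]
          have e1 : R.prefH (R.vc j) (R.vf i j hp) = 3 := R.pref_cf j i hp'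
          have e2 : R.prefH (R.vc j) (R.vd i) = 4 := R.pref_cd j i hp'
          omega
    · refine improve_edge hM (R.adj_df hp) hd ?_ ?_
      · have e1 : R.prefH (R.vd i) (R.vf i j hp) = 3 := R.pref_df i j hp
        rw [e1, rank_eq_of_unmatched hd]
        omega
      · have e1 : R.prefH (R.vf i j hp) (R.vd i) = 1 := R.pref_fd i j hp
        rw [e1, rank_eq_of_unmatched hf]
        omega

end Reduction
namespace Reduction

attribute [local simp] Reduction.va_eq_mk Reduction.vb_eq_mk Reduction.vc_eq_mk
  Reduction.vd_eq_mk Reduction.vu_eq_mk Reduction.vf_eq_mk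

variable {V : Type u} [LinearOrder V] (R : Reduction V) {M : Set (Sym2 R.HV)}
variable {i j k m : V}

lemma pc_tri (hM : IsMatching R.H M) {t : Finset V} (ht : t ∈ R.T) (hm : m ∈ t)
    (hU : s(R.va m, R.vb m) ∈ M) {x : R.HV} (hx : s(R.vc m, x) ∈ M) :
    ∃ m', m' ∈ t ∧ m' ≠ m ∧ x = R.vc m' := by
  rcases R.partner_c hM hx with rfl | rfl | ⟨j', hp2, rfl⟩ | ⟨j', hp2, rfl⟩ |
    ⟨j', t', ht', hm', hj', hne, rfl⟩
  · have := partner_unique hM hU (mem_swap hx)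
    simp at this
  · have := partner_unique hM (mem_swap hU) (mem_swap hx)
    simp at this
  · exact absurd (Sym2.mem_mk_right j' m) (R.not_in_P_of_T ht hm hp2)
  · exact absurd (Sym2.mem_mk_left m j') (R.not_in_P_of_T ht hm hp2)
  · have htt : t' = t := R.T_unique ht' ht hm' hm
    subst htt
    exact ⟨j', hj', hne.symm, rfl⟩

lemma tri_not_all (hM : IsPopular R.H R.prefH M) {t : Finset V} (ht : t ∈ R.T)
    (htijk : t = {i, j, k}) (hij : i < j) (hjk : j < k)
    (hUi : s(R.va i, R.vb i) ∈ M) (hUj : s(R.va j, R.vb j) ∈ M)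
    (hUk : s(R.va k, R.vb k) ∈ M) : False := by
  haveI := R.finite_HV
  have hijne : i ≠ j := hij.ne
  have hikne : i ≠ k := (hij.trans hjk).ne
  have hjkne : j ≠ k := hjk.ne
  have hi : i ∈ t := by rw [htijk]; simp
  have hj : j ∈ t := by rw [htijk]; simp
  have hk : k ∈ t := by rw [htijk]; simp
  obtain ⟨p1, p2, p3, p4, p5, p6, -, -, -, -, -, -⟩ :=
    R.pref_tri t ht i j k htijk hij hjk
  have pci : ∀ x, s(R.vc i, x) ∈ M → x = R.vc j ∨ x = R.vc k := by
    intro x hx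
    obtain ⟨m', hm', hne, rfl⟩ := R.pc_tri hM.1 ht hi hUi hx
    rw [htijk] at hm'
    simp only [Finset.mem_insert, Finset.mem_singleton] at hm'
    rcases hm' with rfl | rfl | rfl
    · exact absurd rfl hne
    · exact Or.inl rfl
    · exact Or.inr rfl
  have pcj : ∀ x, s(R.vc j, x) ∈ M → x = R.vc i ∨ x = R.vc k := by
    intro x hx
    obtain ⟨m', hm', hne, rfl⟩ := R.pc_tri hM.1 ht hj hUj hx
    rw [htijk] at hm'
    simp only [Finset.mem_insert, Finset.mem_singleton] at hm'
    rcases hm' with rfl | rfl | rfl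
    · exact Or.inl rfl
    · exact absurd rfl hne
    · exact Or.inr rfl
  have pck : ∀ x, s(R.vc k, x) ∈ M → x = R.vc i ∨ x = R.vc j := by
    intro x hx
    obtain ⟨m', hm', hne, rfl⟩ := R.pc_tri hM.1 ht hk hUk hx
    rw [htijk] at hm'
    simp only [Finset.mem_insert, Finset.mem_singleton] at hm'
    rcases hm' with rfl | rfl | rfl
    · exact Or.inl rfl
    · exact Or.inr rfl
    · exact absurd rfl hne
  have nci : 4 ≤ (R.H.neighborSet (R.vc i)).ncard :=
    R.ncard_ge4 (R.adj_ac (i := i)).symm (R.adj_bc (i := i)).symm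
      (R.adj_cc ht hi hj hijne) (R.adj_cc ht hi hk hikne)
      (by simp) (by simp) (by simp) (by simp) (by simp) (by simp [hjkne])
  have ncj : 4 ≤ (R.H.neighborSet (R.vc j)).ncard :=
    R.ncard_ge4 (R.adj_ac (i := j)).symm (R.adj_bc (i := j)).symm
      (R.adj_cc ht hj hi hijne.symm) (R.adj_cc ht hj hk hjkne)
      (by simp) (by simp) (by simp) (by simp) (by simp) (by simp [hikne])
  have nck : 4 ≤ (R.H.neighborSet (R.vc k)).ncard :=
    R.ncard_ge4 (R.adj_ac (i := k)).symm (R.adj_bc (i := k)).symm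
      (R.adj_cc ht hk hi hikne.symm) (R.adj_cc ht hk hj hjkne.symm)
      (by simp) (by simp) (by simp) (by simp) (by simp) (by simp [hijne])
  by_cases h1 : Matched M (R.vc i)
  · obtain ⟨x, hx⟩ := h1
    rcases pci x hx with rfl | rfl
    · -- c i ~ c j, c k unmatched, y := c i (rank 4, prefers c k at 3)
      have hcu : ¬ Matched M (R.vc k) := by
        rintro ⟨z, hz⟩
        rcases pck z hz with rfl | rfl
        · have := partner_unique hM.1 hx (mem_swap hz)
          simp [hijne, hijne.symm, hikne, hikne.symm, hjkne, hjkne.symm] at this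
        · have := partner_unique hM.1 (mem_swap hx) (mem_swap hz)
          simp [hijne, hijne.symm, hikne, hikne.symm, hjkne, hjkne.symm] at this
      refine improve_edge hM (R.adj_cc ht hk hi hikne.symm) hcu ?_ ?_
      · have e1 : R.prefH (R.vc k) (R.vc i) = 4 := p6
        rw [e1, rank_eq_of_unmatched hcu]
        omega
      · rw [rank_eq_of_mem hM.1 hx]
        have e1 : R.prefH (R.vc i) (R.vc k) = 3 := p1
        have e2 : R.prefH (R.vc i) (R.vc j) = 4 := p2
        omega
    · -- c i ~ c k, c j unmatched, y := c k (rank 4, prefers c j at 3)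
      have hcu : ¬ Matched M (R.vc j) := by
        rintro ⟨z, hz⟩
        rcases pcj z hz with rfl | rfl
        · have := partner_unique hM.1 hx (mem_swap hz)
          simp [hijne, hijne.symm, hikne, hikne.symm, hjkne, hjkne.symm] at this
        · have := partner_unique hM.1 (mem_swap hx) (mem_swap hz)
          simp [hijne, hijne.symm, hikne, hikne.symm, hjkne, hjkne.symm] at this
      refine improve_edge hM (R.adj_cc ht hj hk hjkne) hcu ?_ ?_
      · have e1 : R.prefH (R.vc j) (R.vc k) = 4 := p4
        rw [e1, rank_eq_of_unmatched hcu]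
        omega
      · rw [rank_eq_of_mem hM.1 (mem_swap hx)]
        have e1 : R.prefH (R.vc k) (R.vc j) = 3 := p5
        have e2 : R.prefH (R.vc k) (R.vc i) = 4 := p6
        omega
  · by_cases h2 : Matched M (R.vc j)
    · obtain ⟨x, hx⟩ := h2
      rcases pcj x hx with rfl | rfl
      · exact h1 ⟨R.vc j, mem_swap hx⟩
      · -- c j ~ c k, c i unmatched, y := c j (rank 4, prefers c i at 3)
        refine improve_edge hM (R.adj_cc ht hi hj hijne) h1 ?_ ?_
        · have e1 : R.prefH (R.vc i) (R.vc j) = 4 := p2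
          rw [e1, rank_eq_of_unmatched h1]
          omega
        · rw [rank_eq_of_mem hM.1 hx]
          have e1 : R.prefH (R.vc j) (R.vc i) = 3 := p3
          have e2 : R.prefH (R.vc j) (R.vc k) = 4 := p4
          omega
    · refine improve_edge hM (R.adj_cc ht hi hj hijne) h1 ?_ ?_
      · have e1 : R.prefH (R.vc i) (R.vc j) = 4 := p2
        rw [e1, rank_eq_of_unmatched h1]
        omega
      · have e1 : R.prefH (R.vc j) (R.vc i) = 3 := p3
        rw [e1, rank_eq_of_unmatched h2]
        omega

lemma sort3 {a b c : V} (hab : a ≠ b) (hac : a ≠ c) (hbc : b ≠ c) :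
    ∃ i j k : V, i < j ∧ j < k ∧ ({a, b, c} : Finset V) = {i, j, k} := by
  rcases hab.lt_or_gt with h1 | h1 <;> rcases hac.lt_or_gt with h2 | h2 <;>
    rcases hbc.lt_or_gt with h3 | h3
  · exact ⟨a, b, c, h1, h3, rfl⟩
  · exact ⟨a, c, b, h2, h3, by ext x; simp; tauto⟩
  · exact absurd (h2.trans h1) (not_lt.mpr h3.le)
  · exact ⟨c, a, b, h2, h1, by ext x; simp; tauto⟩
  · exact ⟨b, a, c, h1, h2, by ext x; simp; tauto⟩
  · exact absurd (h2.trans h3) (not_lt.mpr h1.le)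
  · exact ⟨b, c, a, h3, h2, by ext x; simp; tauto⟩
  · exact ⟨c, b, a, h3, h1, by ext x; simp; tauto⟩

end Reduction
/-- **Reverse direction.** If `M` is a popular matching in `H`, then
`U = {i ∈ V(G) : {a_i, b_i} ∈ M}` is a solution of the Partitioned Vertex Cover
instance `(G, P, T)`. -/
theorem popular_gives_pvc_solution {V : Type u} [LinearOrder V] (R : Reduction V)
    (M : Set (Sym2 R.HV)) (hM : IsPopular R.H R.prefH M) :
    IsPVCSolution R.G R.P R.T {i : V | s(R.va i, R.vb i) ∈ M} := by
  refine ⟨R.isvc hM, ?_, ?_⟩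
  · intro e he
    induction e using Sym2.ind with
    | _ i j =>
      have hadj : R.G.Adj i j := (SimpleGraph.mem_edgeSet _).mp (R.ispvc.2.1 he)
      by_cases hiU : s(R.va i, R.vb i) ∈ M
      · have hjnU : s(R.va j, R.vb j) ∉ M := fun hj => R.pair_not_both hM he hiU hj
        have hset : {x : V | x ∈ s(i, j) ∧ x ∈ {i : V | s(R.va i, R.vb i) ∈ M}} = {i} := by
          ext x
          simp only [Set.mem_setOf_eq, Sym2.mem_iff, Set.mem_singleton_iff]
          constructor
          · rintro ⟨rfl | rfl, hx⟩
            · rfl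
            · exact absurd hx hjnU
          · rintro rfl
            exact ⟨Or.inl rfl, hiU⟩
        rw [hset, Set.ncard_singleton]
      · have hjU : s(R.va j, R.vb j) ∈ M := by
          by_contra hj
          exact R.cover hM hadj hiU hj
        have hset : {x : V | x ∈ s(i, j) ∧ x ∈ {i : V | s(R.va i, R.vb i) ∈ M}} = {j} := by
          ext x
          simp only [Set.mem_setOf_eq, Sym2.mem_iff, Set.mem_singleton_iff]
          constructor
          · rintro ⟨rfl | rfl, hx⟩
            · exact absurd hx hiU
            · rfl
          · rintro rfl
            exact ⟨Or.inr rfl, hjU⟩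
        rw [hset, Set.ncard_singleton]
  · intro t ht
    obtain ⟨a, b, c, hab, hac, hbc, habc⟩ := Finset.card_eq_three.mp (R.ispvc.2.2.2.1 t ht)
    obtain ⟨i, j, k, hij, hjk, heq⟩ := Reduction.sort3 hab hac hbc
    have htijk : t = {i, j, k} := habc.trans heq
    have hi : i ∈ t := by rw [htijk]; simp
    have hj : j ∈ t := by rw [htijk]; simp
    have hk : k ∈ t := by rw [htijk]; simp
    have hijne : i ≠ j := hij.ne
    have hikne : i ≠ k := (hij.trans hjk).ne
    have hjkne : j ≠ k := hjk.ne
    have tri := R.ispvc.2.2.2.2.1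
    have aij : R.G.Adj i j := tri t ht i hi j hj hijne
    have ajk : R.G.Adj j k := tri t ht j hj k hk hjkne
    have aik : R.G.Adj i k := tri t ht i hi k hk hikne
    by_cases hiU : s(R.va i, R.vb i) ∈ M
    · by_cases hjU : s(R.va j, R.vb j) ∈ M
      · have hknU : s(R.va k, R.vb k) ∉ M := fun hk' =>
          R.tri_not_all hM ht htijk hij hjk hiU hjU hk'
        have hset : {x : V | x ∈ t ∧ x ∈ {i : V | s(R.va i, R.vb i) ∈ M}} = {i, j} := by
          ext x
          simp only [Set.mem_setOf_eq, htijk, Finset.mem_insert, Finset.mem_singleton,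
            Set.mem_insert_iff, Set.mem_singleton_iff]
          constructor
          · rintro ⟨rfl | rfl | rfl, hx⟩
            · exact Or.inl rfl
            · exact Or.inr rfl
            · exact absurd hx hknU
          · rintro (rfl | rfl)
            · exact ⟨Or.inl rfl, hiU⟩
            · exact ⟨Or.inr (Or.inl rfl), hjU⟩
        rw [hset, Set.ncard_pair hijne]
      · have hkU : s(R.va k, R.vb k) ∈ M := by
          by_contra hk'
          exact R.cover hM ajk hjU hk'
        have hset : {x : V | x ∈ t ∧ x ∈ {i : V | s(R.va i, R.vb i) ∈ M}} = {i, k} := by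
          ext x
          simp only [Set.mem_setOf_eq, htijk, Finset.mem_insert, Finset.mem_singleton,
            Set.mem_insert_iff, Set.mem_singleton_iff]
          constructor
          · rintro ⟨rfl | rfl | rfl, hx⟩
            · exact Or.inl rfl
            · exact absurd hx hjU
            · exact Or.inr rfl
          · rintro (rfl | rfl)
            · exact ⟨Or.inl rfl, hiU⟩
            · exact ⟨Or.inr (Or.inr rfl), hkU⟩
        rw [hset, Set.ncard_pair hikne]
    · have hjU : s(R.va j, R.vb j) ∈ M := by
        by_contra hj'
        exact R.cover hM aij hiU hj'
      have hkU : s(R.va k, R.vb k) ∈ M := by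
        by_contra hk'
        exact R.cover hM aik hiU hk'
      have hset : {x : V | x ∈ t ∧ x ∈ {i : V | s(R.va i, R.vb i) ∈ M}} = {j, k} := by
        ext x
        simp only [Set.mem_setOf_eq, htijk, Finset.mem_insert, Finset.mem_singleton,
          Set.mem_insert_iff, Set.mem_singleton_iff]
        constructor
        · rintro ⟨rfl | rfl | rfl, hx⟩
          · exact absurd hx hiU
          · exact Or.inl rfl
          · exact Or.inr rfl
        · rintro (rfl | rfl)
          · exact ⟨Or.inr (Or.inl rfl), hjU⟩
          · exact ⟨Or.inr (Or.inr rfl), hkU⟩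
      rw [hset, Set.ncard_pair hjkne]
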